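/- The renormalised R-polynomials satisfy the bar-involution identity: for all y, x ∈ W, the image of r_{y,x} under the involution v ↦ v^{-1} equals (-1)^{ℓ(x)+ℓ(y)} r_{y,x}. Equivalently, r_{y,x}(v^{-1}) = (-1)^{ℓ(x)-ℓ(y)} r_{y,x}(v). -/

import Mathlib

open LaurentPolynomial

noncomputable section

/-- A presentation of the Hecke algebra of a Coxeter system `(W, S)` over `ℤ[v,v⁻¹]`. -/
structure HeckeData {B W : Type*} [Group W] {M : CoxeterMatrix B}
    (cs : CoxeterSystem M W) (H : Type*) [Ring H]
    [Algebra (LaurentPolynomial ℤ) H] where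
  δ : W → H
  basis : Module.Basis W (LaurentPolynomial ℤ) H
  basis_eq : ∀ x : W, basis x = δ x
  δ_one : δ 1 = 1
  quad : ∀ i : B, (δ (cs.simple i) + (T 1 : LaurentPolynomial ℤ) • (1 : H)) *
      (δ (cs.simple i) - (T (-1) : LaurentPolynomial ℤ) • (1 : H)) = 0
  mul_eq : ∀ x y : W, cs.length x + cs.length y = cs.length (x * y) →
      δ x * δ y = δ (x * y)

/-- The bar involution on the Hecke algebra: a ring homomorphism which is
semilinear over the involution `v ↦ v⁻¹` of `ℤ[v,v⁻¹]` and sends `δ_x` to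
`(δ_{x⁻¹})⁻¹`. -/
structure BarData {B W : Type*} [Group W] {M : CoxeterMatrix B}
    {cs : CoxeterSystem M W} {H : Type*} [Ring H]
    [Algebra (LaurentPolynomial ℤ) H] (D : HeckeData cs H) where
  bar : H →+* H
  semilinear : ∀ (p : LaurentPolynomial ℤ) (h : H),
      bar (p • h) = (invert p) • bar h
  bar_delta_mul : ∀ x : W, bar (D.δ x) * D.δ x⁻¹ = 1
  delta_mul_bar : ∀ x : W, D.δ x⁻¹ * bar (D.δ x) = 1

/-- The renormalised `R`-polynomial `r_{y,x}`, defined by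
`bar(δ_x) = ∑_y (-1)^{ℓ(x)+ℓ(y)} r_{y,x} δ_y`. -/
def rpoly {B W : Type*} [Group W] {M : CoxeterMatrix B}
    {cs : CoxeterSystem M W} {H : Type*} [Ring H]
    [Algebra (LaurentPolynomial ℤ) H] {D : HeckeData cs H}
    (Bd : BarData D) (y x : W) : LaurentPolynomial ℤ :=
  (-1 : LaurentPolynomial ℤ) ^ (cs.length x + cs.length y) *
    D.basis.repr (Bd.bar (D.δ x)) y

section Aux

open scoped Classical

variable {B W : Type*} [Group W] {M : CoxeterMatrix B}
    {cs : CoxeterSystem M W} {H : Type*} [Ring H]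
    [Algebra (LaurentPolynomial ℤ) H] {D : HeckeData cs H}

/-- The element `v - v⁻¹` of `ℤ[v,v⁻¹]`. -/
def aa : LaurentPolynomial ℤ := T 1 - T (-1)

lemma invert_aa : invert aa = -aa := by
  simp [aa, map_sub]

lemma delta_simple_sq (i : B) :
    D.δ (cs.simple i) * D.δ (cs.simple i) = 1 - aa • D.δ (cs.simple i) := by
  have h := D.quad i
  set d := D.δ (cs.simple i)
  have expand : (d + (T 1 : LaurentPolynomial ℤ) • (1 : H)) *
      (d - (T (-1) : LaurentPolynomial ℤ) • (1 : H))
      = d * d + aa • d - 1 := by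
    have hT : (T 1 : LaurentPolynomial ℤ) * T (-1) = 1 := by
      have h10 : (1 : ℤ) + (-1) = 0 := by ring
      rw [← T_add, h10, T_zero]
    rw [mul_sub, add_mul, add_mul, smul_mul_assoc, one_mul, mul_smul_comm, mul_one,
      smul_mul_assoc, one_mul, smul_smul, hT, one_smul, aa, sub_smul]
    abel
  rw [expand] at h
  have : d * d + aa • d - 1 + (1 - aa • d) = 0 + (1 - aa • d) := by rw [h]
  simpa using this

lemma delta_simple_mul_inv (i : B) :
    D.δ (cs.simple i) * (D.δ (cs.simple i) + aa • (1 : H)) = 1 := by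
  rw [mul_add, delta_simple_sq, mul_smul_comm, mul_one]
  abel

lemma bar_simple (Bd : BarData D) (i : B) :
    Bd.bar (D.δ (cs.simple i)) = D.δ (cs.simple i) + aa • (1 : H) := by
  have h1 : Bd.bar (D.δ (cs.simple i)) * D.δ (cs.simple i) = 1 := by
    have := Bd.bar_delta_mul (cs.simple i)
    rwa [cs.inv_simple] at this
  calc Bd.bar (D.δ (cs.simple i))
      = Bd.bar (D.δ (cs.simple i)) *
        (D.δ (cs.simple i) * (D.δ (cs.simple i) + aa • (1 : H))) := by
        rw [delta_simple_mul_inv, mul_one]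
    _ = (Bd.bar (D.δ (cs.simple i)) * D.δ (cs.simple i)) *
        (D.δ (cs.simple i) + aa • (1 : H)) := by rw [mul_assoc]
    _ = D.δ (cs.simple i) + aa • (1 : H) := by rw [h1, one_mul]

lemma simple_mul_eq_iff (i : B) (z y : W) :
    cs.simple i * z = y ↔ z = cs.simple i * y := by
  constructor
  · rintro rfl; rw [cs.simple_mul_simple_cancel_left]
  · rintro rfl; rw [cs.simple_mul_simple_cancel_left]

lemma delta_mul_not_desc (i : B) (z : W) (hz : ¬ cs.IsLeftDescent z i) :
    D.δ (cs.simple i) * D.δ z = D.δ (cs.simple i * z) := by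
  apply D.mul_eq
  rw [cs.length_simple, cs.not_isLeftDescent_iff.mp hz]
  omega

lemma delta_mul_desc (i : B) (z : W) (hz : cs.IsLeftDescent z i) :
    D.δ (cs.simple i) * D.δ z = D.δ (cs.simple i * z) - aa • D.δ z := by
  have hlen := cs.isLeftDescent_iff.mp hz
  have hz' : D.δ z = D.δ (cs.simple i) * D.δ (cs.simple i * z) := by
    rw [D.mul_eq]
    · rw [cs.simple_mul_simple_cancel_left]
    · rw [cs.length_simple, cs.simple_mul_simple_cancel_left]; omega
  calc D.δ (cs.simple i) * D.δ z
      = (D.δ (cs.simple i) * D.δ (cs.simple i)) * D.δ (cs.simple i * z) := by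
        rw [hz', mul_assoc]
    _ = D.δ (cs.simple i * z) - aa • (D.δ (cs.simple i) * D.δ (cs.simple i * z)) := by
        rw [delta_simple_sq, sub_mul, one_mul, smul_mul_assoc]
    _ = D.δ (cs.simple i * z) - aa • D.δ z := by rw [← hz']

lemma simple_ne_mul (i : B) (y : W) : cs.simple i * y ≠ y := by
  intro h
  have := cs.isLeftDescent_iff_not_isLeftDescent_mul (w := y) (i := i)
  rw [h] at this
  tauto

lemma repr_simple_mul (i : B) (h : H) (y : W) :
    D.basis.repr (D.δ (cs.simple i) * h) y
      = D.basis.repr h (cs.simple i * y)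
        + (if cs.IsLeftDescent y i then -aa else 0) * D.basis.repr h y := by
  classical
  set R := LaurentPolynomial ℤ
  set c : R := if cs.IsLeftDescent y i then -aa else 0 with hc
  let f : H →ₗ[R] R :=
    (Finsupp.lapply y).comp (D.basis.repr.toLinearMap.comp
      (LinearMap.mulLeft R (D.δ (cs.simple i))))
  let g : H →ₗ[R] R :=
    (Finsupp.lapply (cs.simple i * y)).comp D.basis.repr.toLinearMap
      + c • (Finsupp.lapply y).comp D.basis.repr.toLinearMap
  have hfg : f = g := by
    apply D.basis.ext
    intro z
    simp only [f, g, LinearMap.comp_apply, LinearMap.mulLeft_apply,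
      LinearMap.add_apply, LinearMap.smul_apply, LinearEquiv.coe_toLinearMap,
      Finsupp.lapply_apply, D.basis_eq]
    have hrz : D.basis.repr (D.δ z) = Finsupp.single z 1 := by
      rw [← D.basis_eq, D.basis.repr_self]
    by_cases hz : cs.IsLeftDescent z i
    · rw [delta_mul_desc i z hz, map_sub, map_smul]
      have hrsz : D.basis.repr (D.δ (cs.simple i * z)) = Finsupp.single (cs.simple i * z) 1 := by
        rw [← D.basis_eq, D.basis.repr_self]
      rw [hrz, hrsz]
      simp only [Finsupp.sub_apply, Finsupp.smul_apply, Finsupp.single_apply, smul_eq_mul]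
      by_cases h1 : z = cs.simple i * y
      · have h2 : cs.simple i * z = y := (simple_mul_eq_iff i z y).mpr h1
        have h3 : z ≠ y := by
          rintro rfl; exact simple_ne_mul i z h1.symm
        simp only [if_pos h2, if_pos h1, if_neg h3]
        ring
      · have h2 : cs.simple i * z ≠ y := fun hh => h1 ((simple_mul_eq_iff i z y).mp hh)
        simp only [if_neg h2, if_neg h1]
        by_cases h3 : z = y
        · subst h3
          simp only [if_pos rfl, hc, if_pos hz]
          ring
        · simp only [if_neg h3]
          ring
    · rw [delta_mul_not_desc i z hz]
      have hrsz : D.basis.repr (D.δ (cs.simple i * z)) = Finsupp.single (cs.simple i * z) 1 := by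
        rw [← D.basis_eq, D.basis.repr_self]
      rw [hrz, hrsz]
      simp only [Finsupp.single_apply, smul_eq_mul]
      by_cases h1 : z = cs.simple i * y
      · have h2 : cs.simple i * z = y := (simple_mul_eq_iff i z y).mpr h1
        have h3 : z ≠ y := by
          rintro rfl; exact simple_ne_mul i z h1.symm
        simp only [if_pos h2, if_pos h1, if_neg h3]
        ring
      · have h2 : cs.simple i * z ≠ y := fun hh => h1 ((simple_mul_eq_iff i z y).mp hh)
        simp only [if_neg h2, if_neg h1]
        by_cases h3 : z = y
        · subst h3
          simp only [if_pos rfl, hc, if_neg hz]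
          ring
        · simp only [if_neg h3]
          ring
  have := LinearMap.congr_fun hfg h
  simpa [f, g, smul_eq_mul] using this

lemma key_bar (Bd : BarData D) :
    ∀ (n : ℕ) (x y : W), cs.length x = n →
    invert (D.basis.repr (Bd.bar (D.δ x)) y)
      = (-1 : LaurentPolynomial ℤ) ^ (cs.length x + cs.length y) *
        D.basis.repr (Bd.bar (D.δ x)) y := by
  intro n
  induction n using Nat.strong_induction_on with
  | _ n ih =>
    intro x y hx
    by_cases hx1 : x = 1
    · subst hx1
      rw [D.δ_one, map_one]
      have h1 : (1 : H) = D.basis 1 := by rw [D.basis_eq, D.δ_one]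
      rw [h1, D.basis.repr_self, Finsupp.single_apply]
      by_cases hy : y = 1
      · subst hy
        simp
      · rw [if_neg (fun hh => hy hh.symm)]
        simp
    · obtain ⟨i, hi⟩ := cs.exists_leftDescent_of_ne_one hx1
      have hlen : cs.length (cs.simple i * x) + 1 = cs.length x := cs.isLeftDescent_iff.mp hi
      have hδ : D.δ x = D.δ (cs.simple i) * D.δ (cs.simple i * x) := by
        rw [D.mul_eq]
        · rw [cs.simple_mul_simple_cancel_left]
        · rw [cs.length_simple, cs.simple_mul_simple_cancel_left]; omega
      have hbar : Bd.bar (D.δ x)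
          = D.δ (cs.simple i) * Bd.bar (D.δ (cs.simple i * x))
            + aa • Bd.bar (D.δ (cs.simple i * x)) := by
        rw [hδ, map_mul, bar_simple Bd i, add_mul, smul_mul_assoc, one_mul]
      set z := cs.simple i * x with hz
      set r1 := D.basis.repr (Bd.bar (D.δ z)) (cs.simple i * y) with hr1
      set r2 := D.basis.repr (Bd.bar (D.δ z)) y with hr2
      have hrepr : D.basis.repr (Bd.bar (D.δ x)) y
          = r1 + (if cs.IsLeftDescent y i then -aa else 0) * r2 + aa * r2 := by
        rw [hbar, map_add, map_smul, Finsupp.add_apply, Finsupp.smul_apply,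
          repr_simple_mul, smul_eq_mul]
      have h1 := ih (cs.length z) (by omega) z (cs.simple i * y) rfl
      have h2 := ih (cs.length z) (by omega) z y rfl
      rw [← hr1] at h1
      rw [← hr2] at h2
      rw [hrepr]
      by_cases hd : cs.IsLeftDescent y i
      · have hleny : cs.length (cs.simple i * y) + 1 = cs.length y := cs.isLeftDescent_iff.mp hd
        rw [if_pos hd]
        have hsimp : r1 + -aa * r2 + aa * r2 = r1 := by ring
        rw [hsimp, h1]
        have he : cs.length x + cs.length y
            = cs.length z + cs.length (cs.simple i * y) + 2 := by omega
        rw [he]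
        simp only [pow_add, pow_succ, pow_zero]
        ring
      · have hleny : cs.length (cs.simple i * y) = cs.length y + 1 :=
          cs.not_isLeftDescent_iff.mp hd
        rw [if_neg hd, zero_mul, add_zero, map_add, map_mul, invert_aa, h1, h2]
        have he1 : cs.length z + cs.length (cs.simple i * y) = cs.length x + cs.length y := by
          omega
        have he2 : cs.length x + cs.length y = (cs.length z + cs.length y) + 1 := by omega
        rw [he1, he2, pow_succ]
        ring

end Aux

/-- The bar-involution identity for renormalised `R`-polynomials:
`r̄_{y,x} = (-1)^{ℓ(x)+ℓ(y)} r_{y,x}`. -/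
theorem rpoly_bar {B W : Type*} [Group W] {M : CoxeterMatrix B}
    (cs : CoxeterSystem M W) (H : Type*) [Ring H]
    [Algebra (LaurentPolynomial ℤ) H] (D : HeckeData cs H)
    (Bd : BarData D) (y x : W) :
    invert (rpoly Bd y x) =
      (-1 : LaurentPolynomial ℤ) ^ (cs.length x + cs.length y) * rpoly Bd y x := by
  unfold rpoly
  rw [map_mul, map_pow, map_neg, map_one, key_bar Bd (cs.length x) x y rfl]
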